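/- Let K : X × X → R be a positive semidefinite kernel. Then exp(K), defined by exp(K)(x,y) = exp(K(x,y)), is a positive semidefinite kernel. -/

import Mathlib

def IsPSDKernel {X : Type*} (K : X → X → ℝ) : Prop :=
  (∀ x y, K x y = K y x) ∧
    ∀ (n : ℕ) (x : Fin n → X) (c : Fin n → ℝ),
      0 ≤ ∑ i, ∑ j, c i * c j * K (x i) (x j)

private lemma psd_pow_form {X : Type*} (K : X → X → ℝ) (h : IsPSDKernel K)
    (m : ℕ) (n : ℕ) (x : Fin n → X) (c : Fin n → ℝ) :
    0 ≤ ∑ i, ∑ j, c i * c j * (K (x i) (x j)) ^ m := by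
  induction m generalizing c with
  | zero =>
      simp only [pow_zero, mul_one]
      have : ∑ i, ∑ j, c i * c j = (∑ i, c i) ^ 2 := by
        rw [sq, Finset.sum_mul_sum]
      rw [this]; positivity
  | succ m ih =>
      -- The Gram matrix of K is PSD; decompose it as Bᵀ * B
      set M : Matrix (Fin n) (Fin n) ℝ := Matrix.of (fun i j => K (x i) (x j)) with hM
      have hMpsd : M.PosSemidef := by
        refine Matrix.PosSemidef.of_dotProduct_mulVec_nonneg ?_ ?_
        · ext i j
          simp [Matrix.IsHermitian, Matrix.conjTranspose, hM, h.1 (x i) (x j)]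
        · intro v
          have h0 := h.2 n x v
          refine le_trans h0 (le_of_eq ?_)
          simp only [star_trivial, dotProduct, Matrix.mulVec, hM,
            Matrix.of_apply, Finset.mul_sum]
          exact Finset.sum_congr rfl fun i _ => Finset.sum_congr rfl fun j _ => by ring
      obtain ⟨m', v, hv⟩ := Matrix.posSemidef_iff_eq_sum_vecMulVec.mp hMpsd
      obtain ⟨B, hB⟩ : ∃ B : Matrix (Fin m') (Fin n) ℝ, M = B.conjTranspose * B := by
        refine ⟨Matrix.of fun k i => v k i, ?_⟩
        rw [hv]; ext i j
        simp [Matrix.mul_apply, Matrix.vecMulVec_apply, Matrix.sum_apply, mul_comm]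
      have hMij : ∀ i j, K (x i) (x j) = ∑ k, B k i * B k j := by
        intro i j
        have : M i j = (B.conjTranspose * B) i j := by rw [← hB]
        simpa [Matrix.mul_apply, Matrix.conjTranspose_apply, hM] using this
      have hterm : ∀ i j, ∑ k, (c i * B k i) * (c j * B k j) * (K (x i) (x j)) ^ m
          = c i * c j * (K (x i) (x j)) ^ (m + 1) := by
        intro i j
        have : ∑ k, (c i * B k i) * (c j * B k j) * (K (x i) (x j)) ^ m
            = (∑ k, B k i * B k j) * (c i * c j * (K (x i) (x j)) ^ m) := by
          rw [Finset.sum_mul]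
          exact Finset.sum_congr rfl fun k _ => by ring
        rw [this, ← hMij i j, pow_succ]
        ring
      have key : ∑ k, ∑ i, ∑ j, (c i * B k i) * (c j * B k j) * (K (x i) (x j)) ^ m
          = ∑ i, ∑ j, c i * c j * (K (x i) (x j)) ^ (m + 1) :=
        calc ∑ k, ∑ i, ∑ j, (c i * B k i) * (c j * B k j) * (K (x i) (x j)) ^ m
            = ∑ i, ∑ k, ∑ j, (c i * B k i) * (c j * B k j) * (K (x i) (x j)) ^ m :=
              Finset.sum_comm
          _ = ∑ i, ∑ j, ∑ k, (c i * B k i) * (c j * B k j) * (K (x i) (x j)) ^ m :=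
              Finset.sum_congr rfl fun i _ => Finset.sum_comm
          _ = ∑ i, ∑ j, c i * c j * (K (x i) (x j)) ^ (m + 1) :=
              Finset.sum_congr rfl fun i _ => Finset.sum_congr rfl fun j _ => hterm i j
      rw [← key]
      exact Finset.sum_nonneg fun k _ => ih (fun i => c i * B k i)

/-- the exponential of a PSD kernel is PSD. -/
theorem isPSDKernel_exp {X : Type*} (K : X → X → ℝ) (h : IsPSDKernel K) :
    IsPSDKernel (fun x y => Real.exp (K x y)) := by
  refine ⟨fun x y => by simp [h.1 x y], fun n x c => ?_⟩
  have hexp : ∀ t : ℝ, Real.exp t = ∑' m : ℕ, t ^ m / (m.factorial : ℝ) := by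
    intro t
    rw [Real.exp_eq_exp_ℝ, NormedSpace.exp_eq_tsum_div]
  have hsummable : ∀ i j, Summable (fun m : ℕ => c i * c j * ((K (x i) (x j)) ^ m / (m.factorial : ℝ))) :=
    fun i j => Summable.mul_left _ (Real.summable_pow_div_factorial (K (x i) (x j)))
  calc (0:ℝ) ≤ ∑' m : ℕ, ∑ i, ∑ j, c i * c j * ((K (x i) (x j)) ^ m / (m.factorial : ℝ)) := by
        refine tsum_nonneg fun m => ?_
        have := psd_pow_form K h m n x c
        have h2 : ∑ i, ∑ j, c i * c j * ((K (x i) (x j)) ^ m / (m.factorial : ℝ))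
            = (∑ i, ∑ j, c i * c j * (K (x i) (x j)) ^ m) / (m.factorial : ℝ) := by
          rw [Finset.sum_div]
          refine Finset.sum_congr rfl fun i _ => ?_
          rw [Finset.sum_div]
          refine Finset.sum_congr rfl fun j _ => ?_
          ring
        rw [h2]
        positivity
    _ = ∑ i, ∑ j, c i * c j * Real.exp (K (x i) (x j)) := by
        rw [Summable.tsum_finsetSum (fun i _ => summable_sum fun j _ => hsummable i j)]
        refine Finset.sum_congr rfl fun i _ => ?_
        rw [Summable.tsum_finsetSum (fun j _ => hsummable i j)]
        refine Finset.sum_congr rfl fun j _ => ?_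
        rw [tsum_mul_left, hexp]
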